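/- arXiv:1012.1415 — 2 statements merged into one kernel-verified Lean document; each statement's English description precedes it below -/
import Mathlib

section
/- Let A and M be abelian groups, let ξ : A³ → M satisfy ξ(0,y,z) = ξ(x,0,z) = ξ(x,y,0) = 0 and the cocycle condition (S1) ξ(y,z,t) − ξ(x+y,z,t) + ξ(x,y+z,t) − ξ(x,y,z+t) + ξ(x,y,z) = 0, and let η : A² → M satisfy (S2) ξ(x,y,z) − ξ(x,z,y) + ξ(z,x,y) + η(x+y,z) − η(x,z) − η(y,z) = 0 and (S3) η(x,y) + η(y,x) = 0 for all x,y,z,t ∈ A. Then the groupoid 𝒮 is a symmetric monoidal category with tensor product x ⊕ y := x + y on objects and (x,a) ⊕ (y,b) := (x+y, a+b) on morphisms, unit object 0, identity left and right unit constraints, associativity constraint (x⊕y)⊕z ≅ x⊕(y⊕z) whose inverse morphism has component ξ(x,y,z) (i.e. the inverse is the morphism (x+y+z, ξ(x,y,z))), and symmetry x⊕y → y⊕x given by the morphism (x+y, η(x,y)). Moreover every morphism of 𝒮 is invertible and every object x satisfies x ⊕ (−x) = 0, so 𝒮 is a symmetric categorical group. -/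
/-!
STATEMENT 5: Let `A` and `M` be abelian groups, let `ξ : A³ → M` satisfy
`ξ(0,y,z) = ξ(x,0,z) = ξ(x,y,0) = 0` and the cocycle condition (S1)
`ξ(y,z,t) − ξ(x+y,z,t) + ξ(x,y+z,t) − ξ(x,y,z+t) + ξ(x,y,z) = 0`, and let `η : A² → M`
satisfy (S2) `ξ(x,y,z) − ξ(x,z,y) + ξ(z,x,y) + η(x+y,z) − η(x,z) − η(y,z) = 0` and
(S3) `η(x,y) + η(y,x) = 0` for all `x,y,z,t ∈ A`. Then the groupoid `𝒮` is a symmetric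
monoidal category with tensor product `x ⊕ y := x + y` on objects and
`(x,a) ⊕ (y,b) := (x+y, a+b)` on morphisms, unit object `0`, identity left and right
unit constraints, associativity constraint `(x⊕y)⊕z ≅ x⊕(y⊕z)` whose inverse morphism
has component `ξ(x,y,z)` (i.e. the inverse is the morphism `(x+y+z, ξ(x,y,z))`), and
symmetry `x⊕y → y⊕x` given by the morphism `(x+y, η(x,y))`. Moreover every morphism of
`𝒮` is invertible and every object `x` satisfies `x ⊕ (−x) = 0`, so `𝒮` is a symmetric
categorical group.
-/

open CategoryTheory MonoidalCategory

/-- Objects of the groupoid `𝒮`: the elements of `A` (the parameter `M` is a phantom). -/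
structure GObj (A M : Type) where
  base : A

/-- Morphisms of the groupoid `𝒮`: a morphism `a → b` exists only when `a = b`, and is
given by an element of `M`. -/
structure GHom {A M : Type} (a b : GObj A M) where
  eq : a.base = b.base
  val : M

theorem GHom.ext' {A M : Type} {a b : GObj A M} {f g : GHom a b}
    (h : f.val = g.val) : f = g := by
  cases f; cases g; cases h; rfl

variable (A M : Type)

instance GObj.category [AddCommGroup M] : Category (GObj A M) where
  Hom a b := GHom a b
  id a := ⟨rfl, 0⟩
  comp f g := ⟨f.eq.trans g.eq, f.val + g.val⟩
  id_comp f := GHom.ext' (zero_add _)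
  comp_id f := GHom.ext' (add_zero _)
  assoc f g h := GHom.ext' (add_assoc _ _ _)

/-- The monoidal structure on `𝒮` determined by the associativity data `ξ` : the tensor
product is the addition of `A`, `(x,a) ⊕ (y,b) = (x+y, a+b)`, the unit is `0` with
identity unit constraints, and the associator is the isomorphism whose inverse is
`(x+y+z, ξ(x,y,z))`. -/
def gAddStruct [AddCommGroup A] [AddCommGroup M] (ξ : A → A → A → M) :
    MonoidalCategoryStruct (GObj A M) where
  tensorObj a b := ⟨a.base + b.base⟩
  whiskerLeft a _ _ f := ⟨by dsimp; rw [f.eq], f.val⟩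
  whiskerRight f b := ⟨by dsimp; rw [f.eq], f.val⟩
  tensorHom f g := ⟨by dsimp; rw [f.eq, g.eq], f.val + g.val⟩
  tensorUnit := ⟨0⟩
  associator a b c :=
    { hom := ⟨add_assoc a.base b.base c.base, -ξ a.base b.base c.base⟩
      inv := ⟨(add_assoc a.base b.base c.base).symm, ξ a.base b.base c.base⟩
      hom_inv_id := GHom.ext' (neg_add_cancel _)
      inv_hom_id := GHom.ext' (add_neg_cancel _) }
  leftUnitor a :=
    { hom := ⟨zero_add a.base, 0⟩
      inv := ⟨(zero_add a.base).symm, 0⟩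
      hom_inv_id := GHom.ext' (zero_add 0)
      inv_hom_id := GHom.ext' (zero_add 0) }
  rightUnitor a :=
    { hom := ⟨add_zero a.base, 0⟩
      inv := ⟨(add_zero a.base).symm, 0⟩
      hom_inv_id := GHom.ext' (zero_add 0)
      inv_hom_id := GHom.ext' (zero_add 0) }

@[simp] lemma GHom.comp_val {A M : Type} [AddCommGroup M] {a b c : GObj A M}
    (f : a ⟶ b) (g : b ⟶ c) : (f ≫ g).val = f.val + g.val := rfl

@[simp] lemma GHom.id_val {A M : Type} [AddCommGroup M] (a : GObj A M) :
    GHom.val (𝟙 a) = 0 := rfl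

/-- `𝒮` is a symmetric monoidal category with the given monoidal structure and with
symmetry `(x+y, η(x,y))`; moreover it is a symmetric categorical group: every morphism
is invertible and every object has a tensor-inverse. -/
theorem gObj_symmetricCategoricalGroup [AddCommGroup A] [AddCommGroup M]
    (ξ : A → A → A → M) (η : A → A → M)
    (hξnorm : ∀ x y z : A, ξ 0 y z = 0 ∧ ξ x 0 z = 0 ∧ ξ x y 0 = 0)
    (hS1 : ∀ x y z t : A,
      ξ y z t - ξ (x + y) z t + ξ x (y + z) t - ξ x y (z + t) + ξ x y z = 0)
    (hS2 : ∀ x y z : A,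
      ξ x y z - ξ x z y + ξ z x y + η (x + y) z - η x z - η y z = 0)
    (hS3 : ∀ x y : A, η x y + η y x = 0) :
    (∃ inst : MonoidalCategory (GObj A M),
      inst.toMonoidalCategoryStruct = gAddStruct A M ξ ∧
      (letI := inst
       ∃ sinst : SymmetricCategory (GObj A M),
         ∀ a b : GObj A M, GHom.val (sinst.braiding a b).hom = η a.base b.base)) ∧
    (∀ (a b : GObj A M) (f : a ⟶ b), IsIso f) ∧
    (∀ a : GObj A M,
      (gAddStruct A M ξ).tensorObj a ⟨-a.base⟩ = (⟨0⟩ : GObj A M)) := by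
  letI inst : MonoidalCategory (GObj A M) :=
    { toMonoidalCategoryStruct := gAddStruct A M ξ
      tensorHom_def := by
        intros; apply GHom.ext'; unfold gAddStruct; simp
      id_tensorHom_id := by
        intros; apply GHom.ext'; unfold gAddStruct; simp
      tensorHom_comp_tensorHom := by
        intros; apply GHom.ext'; unfold gAddStruct; simp; abel
      whiskerLeft_id := by
        intros; apply GHom.ext'; unfold gAddStruct; simp
      id_whiskerRight := by
        intros; apply GHom.ext'; unfold gAddStruct; simp
      associator_naturality := by
        rintro ⟨x₁⟩ ⟨x₂⟩ ⟨x₃⟩ ⟨y₁⟩ ⟨y₂⟩ ⟨y₃⟩ ⟨h₁, v₁⟩ ⟨h₂, v₂⟩ ⟨h₃, v₃⟩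
        dsimp at h₁ h₂ h₃; subst h₁; subst h₂; subst h₃
        apply GHom.ext'; unfold gAddStruct; simp; abel
      leftUnitor_naturality := by
        intros; apply GHom.ext'; unfold gAddStruct; simp
      rightUnitor_naturality := by
        intros; apply GHom.ext'; unfold gAddStruct; simp
      pentagon := by
        intro W X Y Z
        apply GHom.ext'; unfold gAddStruct; simp
        linear_combination (norm := abel1) - hS1 W.base X.base Y.base Z.base
      triangle := by
        intro X Y
        apply GHom.ext'
        show -ξ X.base 0 Y.base + 0 = 0
        rw [(hξnorm X.base 0 Y.base).2.1]; abel }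
  letI sinst : SymmetricCategory (GObj A M) :=
    { braiding := fun a b =>
        { hom := ⟨add_comm a.base b.base, η a.base b.base⟩
          inv := ⟨add_comm b.base a.base, η b.base a.base⟩
          hom_inv_id := GHom.ext' (by simpa using hS3 a.base b.base)
          inv_hom_id := GHom.ext' (by simpa using hS3 b.base a.base) }
      braiding_naturality_right := by
        rintro ⟨x⟩ ⟨y⟩ ⟨z⟩ ⟨h, v⟩
        dsimp at h; subst h
        apply GHom.ext'
        show v + η x y = η x y + v
        abel
      braiding_naturality_left := by
        rintro ⟨x⟩ ⟨y⟩ ⟨h, v⟩ ⟨z⟩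
        dsimp at h; subst h
        apply GHom.ext'
        show v + η x z = η x z + v
        abel
      hexagon_forward := by
        intro X Y Z
        apply GHom.ext'
        show -ξ X.base Y.base Z.base + (η X.base (Y.base + Z.base) + -ξ Y.base Z.base X.base) =
          η X.base Y.base + (-ξ Y.base X.base Z.base + η X.base Z.base)
        linear_combination (norm := abel1) (- hS2 Y.base Z.base X.base) +
          hS3 X.base (Y.base + Z.base) - hS3 X.base Y.base - hS3 X.base Z.base
      hexagon_reverse := by
        intro X Y Z
        apply GHom.ext'
        show ξ X.base Y.base Z.base + (η (X.base + Y.base) Z.base + ξ Z.base X.base Y.base) =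
          η Y.base Z.base + (ξ X.base Z.base Y.base + η X.base Z.base)
        linear_combination (norm := abel1) hS2 X.base Y.base Z.base
      symmetry := by
        intro X Y
        apply GHom.ext'
        show η X.base Y.base + η Y.base X.base = 0
        exact hS3 _ _ }
  refine ⟨⟨inst, rfl, sinst, fun a b => rfl⟩, ?_, ?_⟩
  · intro a b f
    exact ⟨⟨f.eq.symm, -f.val⟩, GHom.ext' (add_neg_cancel _), GHom.ext' (neg_add_cancel _)⟩
  · intro a
    show GObj.mk _ = _
    rw [add_neg_cancel]
end

section
/- Every strong monoidal functor is monoidally isomorphic to one that strictly preserves the unit: given monoidal categories C, D and a strong monoidal functor F : C ⥤ D with unit isomorphism ε : 𝟙_D ≅ F(𝟙_C), there exist a strong monoidal functor F' : C ⥤ D with F'(𝟙_C) = 𝟙_D and whose unit isomorphism is the identity (transported along this equality of objects), and a monoidal natural isomorphism θ : F ≅ F'. -/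
/-!
STATEMENT 11: Every strong monoidal functor is monoidally isomorphic to one that
strictly preserves the unit.
-/

open CategoryTheory MonoidalCategory

section Aux

variable {C D : Type*} [Category C] [Category D]
  [MonoidalCategory C] [MonoidalCategory D]

noncomputable def transportCore (F F' : C ⥤ D) [F.Monoidal] (θ : F ≅ F') :
    F'.CoreMonoidal where
  εIso := Functor.Monoidal.εIso F ≪≫ θ.app (𝟙_ C)
  μIso X Y := ((θ.app X).symm ⊗ᵢ (θ.app Y).symm) ≪≫ Functor.Monoidal.μIso F X Y ≪≫
    θ.app (X ⊗ Y)
  μIso_hom_natural_left {X Y} f X' := by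
    have h : F'.map f = θ.inv.app X ≫ F.map f ≫ θ.hom.app Y := by simp
    simp only [Iso.trans_hom, Iso.symm_hom, tensorIso_hom, Iso.app_inv, Iso.app_hom,
      Functor.Monoidal.μIso_hom, Category.assoc, h, MonoidalCategory.tensorHom_def, comp_whiskerRight]
    rw [← comp_whiskerRight_assoc (θ.hom.app Y) (θ.inv.app Y), Iso.hom_inv_id_app]
    simp only [id_whiskerRight, Category.id_comp]
    rw [← whisker_exchange_assoc (F.map f) (θ.inv.app X'),
      Functor.LaxMonoidal.μ_natural_left_assoc, ← NatTrans.naturality]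
  μIso_hom_natural_right {X Y} X' f := by
    have h : F'.map f = θ.inv.app X ≫ F.map f ≫ θ.hom.app Y := by simp
    simp only [Iso.trans_hom, Iso.symm_hom, tensorIso_hom, Iso.app_inv, Iso.app_hom,
      Functor.Monoidal.μIso_hom, Category.assoc, h, tensorHom_def', MonoidalCategory.whiskerLeft_comp]
    rw [← MonoidalCategory.whiskerLeft_comp_assoc _ (θ.hom.app Y) (θ.inv.app Y),
      Iso.hom_inv_id_app]
    simp only [MonoidalCategory.whiskerLeft_id, Category.id_comp]
    rw [whisker_exchange_assoc (θ.inv.app X') (F.map f),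
      Functor.LaxMonoidal.μ_natural_right_assoc, ← NatTrans.naturality]
  associativity X Y Z := by
    have hmap : F'.map (α_ X Y Z).hom =
        θ.inv.app ((X ⊗ Y) ⊗ Z) ≫ F.map (α_ X Y Z).hom ≫ θ.hom.app (X ⊗ (Y ⊗ Z)) := by simp
    simp only [Iso.trans_hom, Iso.symm_hom, tensorIso_hom, Iso.app_inv, Iso.app_hom,
      Functor.Monoidal.μIso_hom, Category.assoc, hmap]
    have c1 : ∀ (W : C) (V : D) {T : D} (g : F.obj W ⊗ V ⟶ T),
        θ.hom.app W ▷ V ≫ θ.inv.app W ▷ V ≫ g = g := by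
      intros; rw [← comp_whiskerRight_assoc, Iso.hom_inv_id_app]; simp
    have c2 : ∀ (W : C) (V : D) {T : D} (g : V ⊗ F.obj W ⟶ T),
        V ◁ θ.hom.app W ≫ V ◁ θ.inv.app W ≫ g = g := by
      intros; rw [← MonoidalCategory.whiskerLeft_comp_assoc, Iso.hom_inv_id_app]; simp
    simp only [MonoidalCategory.tensorHom_def, comp_whiskerRight, MonoidalCategory.whiskerLeft_comp,
      Category.assoc, Iso.hom_inv_id_app_assoc, c1, c2]
    rw [← whisker_exchange_assoc (Functor.LaxMonoidal.μ F X Y) (θ.inv.app Z),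
      Functor.LaxMonoidal.associativity_assoc,
      whisker_exchange_assoc (θ.inv.app X) (θ.hom.app (Y ⊗ Z)), c2,
      whisker_exchange_assoc (θ.inv.app X) (Functor.LaxMonoidal.μ F Y Z),
      whisker_exchange_assoc (θ.inv.app X) (F.obj Y ◁ θ.inv.app Z),
      whisker_exchange_assoc (θ.inv.app X) (θ.inv.app Y ▷ F'.obj Z)]
    have := associator_naturality_assoc (θ.inv.app X) (θ.inv.app Y) (θ.inv.app Z)
      (F.obj X ◁ Functor.LaxMonoidal.μ F Y Z ≫ Functor.LaxMonoidal.μ F X (Y ⊗ Z) ≫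
        θ.hom.app (X ⊗ Y ⊗ Z))
    simp only [MonoidalCategory.tensorHom_def, comp_whiskerRight, MonoidalCategory.whiskerLeft_comp,
      Category.assoc] at this
    rw [← this]
  left_unitality X := by
    have hmap : F'.map (λ_ X).hom =
        θ.inv.app (𝟙_ C ⊗ X) ≫ F.map (λ_ X).hom ≫ θ.hom.app X := by simp
    have c1 : ∀ (W : C) (V : D) {T : D} (g : F.obj W ⊗ V ⟶ T),
        θ.hom.app W ▷ V ≫ θ.inv.app W ▷ V ≫ g = g := by
      intros; rw [← comp_whiskerRight_assoc, Iso.hom_inv_id_app]; simp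
    simp only [Iso.trans_hom, Iso.app_hom, Iso.symm_hom, tensorIso_hom, Iso.app_inv,
      Functor.Monoidal.εIso_hom, Functor.Monoidal.μIso_hom, Category.assoc, hmap,
      Iso.hom_inv_id_app_assoc, MonoidalCategory.tensorHom_def, comp_whiskerRight, c1]
    rw [← whisker_exchange_assoc (Functor.LaxMonoidal.ε F) (θ.inv.app X),
      ← Functor.LaxMonoidal.left_unitality_assoc,
      MonoidalCategory.leftUnitor_naturality_assoc, Iso.inv_hom_id_app, Category.comp_id]
  right_unitality X := by
    have hmap : F'.map (ρ_ X).hom =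
        θ.inv.app (X ⊗ 𝟙_ C) ≫ F.map (ρ_ X).hom ≫ θ.hom.app X := by simp
    have c2 : ∀ (W : C) (V : D) {T : D} (g : V ⊗ F.obj W ⟶ T),
        V ◁ θ.hom.app W ≫ V ◁ θ.inv.app W ≫ g = g := by
      intros; rw [← MonoidalCategory.whiskerLeft_comp_assoc, Iso.hom_inv_id_app]; simp
    simp only [Iso.trans_hom, Iso.app_hom, Iso.symm_hom, tensorIso_hom, Iso.app_inv,
      Functor.Monoidal.εIso_hom, Functor.Monoidal.μIso_hom, Category.assoc, hmap,
      Iso.hom_inv_id_app_assoc, tensorHom_def', MonoidalCategory.whiskerLeft_comp, c2]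
    rw [whisker_exchange_assoc (θ.inv.app X) (Functor.LaxMonoidal.ε F),
      ← Functor.LaxMonoidal.right_unitality_assoc,
      MonoidalCategory.rightUnitor_naturality_assoc, Iso.inv_hom_id_app, Category.comp_id]


lemma transportCore_ε (F F' : C ⥤ D) [F.Monoidal] (θ : F ≅ F') :
    letI := (transportCore F F' θ).toMonoidal
    Functor.LaxMonoidal.ε F' = Functor.LaxMonoidal.ε F ≫ θ.hom.app (𝟙_ C) := rfl

lemma transportCore_μ (F F' : C ⥤ D) [F.Monoidal] (θ : F ≅ F') (X Y : C) :
    letI := (transportCore F F' θ).toMonoidal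
    Functor.LaxMonoidal.μ F' X Y = (θ.inv.app X ⊗ₘ θ.inv.app Y) ≫
      Functor.LaxMonoidal.μ F X Y ≫ θ.hom.app (X ⊗ Y) := rfl

lemma transportCore_isMonoidal (F F' : C ⥤ D) [F.Monoidal] (θ : F ≅ F') :
    letI := (transportCore F F' θ).toMonoidal
    NatTrans.IsMonoidal θ.hom := by
  letI := (transportCore F F' θ).toMonoidal
  constructor
  · rw [transportCore_ε]
  · intro X Y
    rw [transportCore_μ]
    simp [tensorHom_comp_tensorHom_assoc]

end Aux

theorem strong_monoidal_functor_normalize_unit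
    (C D : Type*) [Category C] [Category D]
    [MonoidalCategory C] [MonoidalCategory D]
    (F : C ⥤ D) [F.Monoidal] :
    ∃ (F' : C ⥤ D) (instF' : F'.Monoidal),
      letI := instF'
      ∃ h : F'.obj (𝟙_ C) = 𝟙_ D,
        Functor.LaxMonoidal.ε F' = eqToHom h.symm ∧
        ∃ θ : F ≅ F', NatTrans.IsMonoidal θ.hom := by
  classical
  let G : C → D := fun X => if X = 𝟙_ C then 𝟙_ D else F.obj X
  have hG : G (𝟙_ C) = 𝟙_ D := if_pos rfl
  let e : ∀ X, F.obj X ≅ G X := fun X =>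
    if h : X = 𝟙_ C then
      eqToIso (by rw [h]) ≪≫ (Functor.Monoidal.εIso F).symm ≪≫ eqToIso (by rw [h, hG])
    else eqToIso (by simp only [G, if_neg h])
  have he : e (𝟙_ C) =
      eqToIso rfl ≪≫ (Functor.Monoidal.εIso F).symm ≪≫
        eqToIso hG.symm := dif_pos rfl
  let F' : C ⥤ D := F.copyObj G e
  let θ : F ≅ F' := F.isoCopyObj G e
  refine ⟨F', (transportCore F F' θ).toMonoidal, hG, ?_, θ, transportCore_isMonoidal F F' θ⟩
  rw [transportCore_ε F F' θ]
  have happ : θ.hom.app (𝟙_ C) = (e (𝟙_ C)).hom := rfl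
  rw [happ, he]
  simp [Functor.Monoidal.εIso]
  erw [Functor.Monoidal.ε_η_assoc]
  rfl
end
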